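/- Let q = 2^ℓ with s | q−1, and let G_s ≤ F_q* be the multiplicative subgroup of order s. For every point (x, y) ∈ F_q² \ {(0,0)}, there exist at least s − 1 pairwise non-equivalent simple lines of the form L(T) = (T, αT + β) with α ∈ G_s, β ≠ 0, passing through (x, y). Moreover, no such line passes through the origin. -/

import Mathlib

/-- Through every nonzero point of `F_q²` pass at least `s - 1` pairwise
non-equivalent simple lines `L(T) = (T, αT + β)` with `α ∈ G_s` (the subgroup
of `s`-th roots of unity) and `β ≠ 0`; and no such line passes through the
origin. -/
theorem lines_through_points (ℓ : ℕ) (F : Type*) [Field F] [Fintype F]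
    (hF : Fintype.card F = 2 ^ ℓ) (s : ℕ) (hs : s ∣ 2 ^ ℓ - 1) :
    (∀ x y : F, (x, y) ≠ (0, 0) →
      ∃ S : Finset (F × F), s - 1 ≤ S.card ∧
        (∀ p ∈ S, p.1 ^ s = 1 ∧ p.2 ≠ 0 ∧ p.1 * x + p.2 = y) ∧
        (∀ p ∈ S, ∀ p' ∈ S, p ≠ p' →
          Set.range (fun T : F => (T, p.1 * T + p.2)) ≠
            Set.range (fun T : F => (T, p'.1 * T + p'.2)))) ∧
    (∀ α β : F, α ^ s = 1 → β ≠ 0 →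
      ((0 : F), (0 : F)) ∉ Set.range (fun T : F => (T, α * T + β))) := by
  classical
  have h2 : 2 ≤ Fintype.card F := Fintype.one_lt_card
  have hq : 1 ≤ 2 ^ ℓ - 1 := by omega
  have hs0 : s ≠ 0 := by
    rintro rfl
    exact absurd (Nat.eq_zero_of_zero_dvd hs) (by omega)
  have hspos : 0 < s := Nat.pos_of_ne_zero hs0
  -- a primitive s-th root of unity
  obtain ⟨g, hg⟩ := IsCyclic.exists_ofOrder_eq_natCard (α := Fˣ)
  have hcard : Nat.card Fˣ = 2 ^ ℓ - 1 := by
    rw [Nat.card_eq_fintype_card, Fintype.card_units, hF]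
  have hgo : orderOf g = 2 ^ ℓ - 1 := by rw [hg, hcard]
  have hζu : orderOf (g ^ (orderOf g / s)) = s :=
    orderOf_pow_orderOf_div (by omega) (by rw [hgo]; exact hs)
  have hprim : IsPrimitiveRoot (((g ^ (orderOf g / s) : Fˣ)) : F) s := by
    rw [IsPrimitiveRoot.coe_units_iff]
    have := IsPrimitiveRoot.orderOf (g ^ (orderOf g / s))
    rwa [hζu] at this
  constructor
  · intro x y hxy
    set R : Finset F := Polynomial.nthRootsFinset s (1 : F) with hR
    have hRcard : R.card = s := hprim.card_nthRootsFinset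
    have hRmem : ∀ a : F, a ∈ R ↔ a ^ s = 1 := fun a =>
      Polynomial.mem_nthRootsFinset hspos 1
    set T : Finset F := R.filter (fun α => y - α * x ≠ 0) with hT
    have hbad : (R.filter (fun α => ¬ (y - α * x ≠ 0))).card ≤ 1 := by
      apply Finset.card_le_one.2
      intro a ha b hb
      simp only [Finset.mem_filter, not_not] at ha hb
      by_cases hx : x = 0
      · exfalso
        have hy : y ≠ 0 := by
          intro hy; exact hxy (by rw [hx, hy])
        have := ha.2; rw [hx, mul_zero, sub_zero] at this; exact hy this
      · have h1 : a * x = y := by linear_combination -ha.2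
        have h2' : b * x = y := by linear_combination -hb.2
        field_simp at h1 h2'
        have : a * x = b * x := by rw [h1, ← h2', mul_comm]
        exact mul_right_cancel₀ hx this
    have hTcard : s - 1 ≤ T.card := by
      have := Finset.card_filter_add_card_filter_not
        (s := R) (p := fun α => y - α * x ≠ 0)
      have hTc : T.card = (R.filter (fun α => y - α * x ≠ 0)).card := rfl
      omega
    refine ⟨T.image (fun α => (α, y - α * x)), ?_, ?_, ?_⟩
    · rw [Finset.card_image_of_injOn (fun a _ b _ h => (Prod.ext_iff.1 h).1)]
      exact hTcard
    · intro p hp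
      obtain ⟨α, hα, rfl⟩ := Finset.mem_image.1 hp
      rw [hT, Finset.mem_filter, hRmem] at hα
      exact ⟨hα.1, hα.2, by ring⟩
    · intro p hp p' hp' hne hrange
      apply hne
      have h0 : ((0 : F), p.1 * 0 + p.2) ∈ Set.range (fun T : F => (T, p'.1 * T + p'.2)) := by
        rw [← hrange]; exact ⟨0, rfl⟩
      have h1 : ((1 : F), p.1 * 1 + p.2) ∈ Set.range (fun T : F => (T, p'.1 * T + p'.2)) := by
        rw [← hrange]; exact ⟨1, rfl⟩
      obtain ⟨t0, ht0⟩ := h0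
      obtain ⟨t1, ht1⟩ := h1
      rw [Prod.mk.injEq] at ht0 ht1
      obtain ⟨rfl, hb⟩ := ht0
      obtain ⟨rfl, ha⟩ := ht1
      rw [mul_zero, mul_zero, zero_add, zero_add] at hb
      rw [mul_one, mul_one] at ha
      have : p.1 = p'.1 := by linear_combination hb - ha
      exact Prod.ext this hb.symm
  · rintro α β hα hβ ⟨t, ht⟩
    rw [Prod.mk.injEq] at ht
    obtain ⟨rfl, h⟩ := ht
    rw [mul_zero, zero_add] at h
    exact hβ h
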